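/- For every multivariate polynomial f ∈ ℚ[X] over a finite parameter set X, there exist a simple pMC D over X whose only cycles are self-loops at absorbing states and a target set T such that for every valuation val : X → [0,1]: Pr_{D[val]}(◇T) ≤ 1/2 if and only if f(val) ≤ 0. -/

import Mathlib

/-- A finite path in state space `S`: a length `m` together with `m + 1` states. -/
abbrev MCPath (S : Type) : Type := Σ m : ℕ, Fin (m + 1) → S

/-- The mass of a path: the product of the transition probabilities along it. -/
def pathMass {S : Type} (P : S → S → ℝ) (π : MCPath S) : ℝ :=
  ∏ i : Fin π.1, P (π.2 i.castSucc) (π.2 i.succ)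

/-- A hitting path from `s` to `T`: it starts in `s`, ends in `T`, and no proper prefix
visits `T`. -/
def IsHitting {S : Type} (T : Set S) (s : S) (π : MCPath S) : Prop :=
  π.2 0 = s ∧ π.2 (Fin.last π.1) ∈ T ∧ ∀ i : Fin π.1, π.2 i.castSucc ∉ T

/-- The reachability probability `Pr_{P,s}(◇T)`: the sum of the masses of all hitting
paths from `s` to `T`. -/
noncomputable def reachProb {S : Type} (P : S → S → ℝ) (T : Set S) (s : S) : ℝ :=
  ∑' π : {π : MCPath S // IsHitting T s π}, pathMass P π.1

open scoped ENNReal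

noncomputable section ReachTheory

variable {S : Type}

def massE (Q : S → S → ℝ≥0∞) (π : MCPath S) : ℝ≥0∞ :=
  ∏ i : Fin π.1, Q (π.2 i.castSucc) (π.2 i.succ)

def reachE (Q : S → S → ℝ≥0∞) (T : Set S) (s : S) : ℝ≥0∞ :=
  ∑' π : {π : MCPath S // IsHitting T s π}, massE Q π.1

theorem reachE_mem (Q : S → S → ℝ≥0∞) (T : Set S) (s : S) (hs : s ∈ T) :
    reachE Q T s = 1 := by
  have h0 : IsHitting T s ⟨0, fun _ => s⟩ := ⟨rfl, hs, fun i => i.elim0⟩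
  have huniq : ∀ π : {π : MCPath S // IsHitting T s π},
      π = ⟨⟨0, fun _ => s⟩, h0⟩ := by
    rintro ⟨⟨m, g⟩, hg⟩
    have hm : m = 0 := by
      by_contra hm
      obtain ⟨k, rfl⟩ : ∃ k, m = k + 1 := ⟨m - 1, by omega⟩
      exact hg.2.2 0 (by rw [show (0 : Fin (k+1)).castSucc = 0 from rfl, hg.1]; exact hs)
    subst hm
    have hfun : g = fun _ => s := by
      funext j
      have hj : j = 0 := by have := j.isLt; ext; omega
      rw [hj]; exact hg.1
    apply Subtype.ext
    exact congrArg (Sigma.mk 0) hfun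
  rw [reachE, tsum_eq_single (⟨⟨0, fun _ => s⟩, h0⟩ : {π : MCPath S // IsHitting T s π})
    (fun b hb => absurd (huniq b) hb)]
  simp [massE]

theorem reachE_step [Fintype S] (Q : S → S → ℝ≥0∞) (T : Set S) (s : S) (hs : s ∉ T) :
    reachE Q T s = ∑ s' : S, Q s s' * reachE Q T s' := by
  classical
  have hcons : ∀ (s' : S) (m : ℕ) (g : Fin (m + 1) → S), IsHitting T s' ⟨m, g⟩ →
      IsHitting T s ⟨m + 1, Fin.cons s g⟩ := by
    intro s' m g h
    refine ⟨by show (Fin.cons s g : Fin (m + 2) → S) 0 = s; simp, ?_, ?_⟩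
    · show (Fin.cons s g : Fin (m + 2) → S) (Fin.last (m + 1)) ∈ T
      rw [show Fin.last (m + 1) = (Fin.last m).succ from rfl, Fin.cons_succ]
      exact h.2.1
    · intro i
      show (Fin.cons s g : Fin (m + 2) → S) i.castSucc ∉ T
      induction i using Fin.cases with
      | zero => simpa using hs
      | succ j =>
        rw [← Fin.succ_castSucc, Fin.cons_succ]
        exact h.2.2 j
  let E : (Σ s' : S, {π : MCPath S // IsHitting T s' π}) → {π : MCPath S // IsHitting T s π} :=
    fun a => ⟨⟨a.2.1.1 + 1, Fin.cons s a.2.1.2⟩, hcons a.1 a.2.1.1 a.2.1.2 a.2.2⟩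
  have hinj : Function.Injective E := by
    rintro ⟨s₁, ⟨⟨m₁, g₁⟩, h₁⟩⟩ ⟨s₂, ⟨⟨m₂, g₂⟩, h₂⟩⟩ hab
    have hval := congrArg Subtype.val hab
    dsimp only [E] at hval
    have hm : m₁ = m₂ := by
      have h' := congrArg (fun x : MCPath S => x.1) hval
      dsimp at h'; omega
    subst hm
    have hval2 := eq_of_heq (Sigma.mk.inj_iff.mp hval).2
    have hgg : g₁ = g₂ := by
      funext i
      have hfi := congrFun hval2 i.succ
      rwa [Fin.cons_succ, Fin.cons_succ] at hfi
    subst hgg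
    have hss : s₁ = s₂ := by rw [← h₁.1, ← h₂.1]
    subst hss
    rfl
  have hsurj : Function.Surjective E := by
    rintro ⟨⟨m, g⟩, h⟩
    have hm : m ≠ 0 := by
      rintro rfl
      exact hs (by have h2 := h.2.1; rwa [show Fin.last 0 = 0 from rfl, h.1] at h2)
    obtain ⟨k, rfl⟩ : ∃ k, m = k + 1 := ⟨m - 1, by omega⟩
    have hh1 : g 0 = s := h.1
    refine ⟨⟨g 1, ⟨⟨k, fun i => g i.succ⟩, ?_, ?_, ?_⟩⟩, ?_⟩
    · rfl
    · show g (Fin.last k).succ ∈ T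
      rw [show (Fin.last k).succ = Fin.last (k + 1) from rfl]
      exact h.2.1
    · intro i
      show g i.castSucc.succ ∉ T
      rw [Fin.succ_castSucc]
      exact h.2.2 i.succ
    · apply Subtype.ext
      have hfun : Fin.cons s (fun i : Fin (k + 1) => g i.succ) = g := by
        funext j
        induction j using Fin.cases with
        | zero => rw [Fin.cons_zero]; exact hh1.symm
        | succ i => rw [Fin.cons_succ]
      exact congrArg (Sigma.mk (k + 1)) hfun
  have hE : Function.Bijective E := ⟨hinj, hsurj⟩
  have htsum := (Equiv.ofBijective E hE).tsum_eq (fun π : {π : MCPath S // IsHitting T s π} => massE Q π.1)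
  rw [reachE, ← htsum]
  have hmass : ∀ a : Σ s' : S, {π : MCPath S // IsHitting T s' π},
      massE Q (E a).1 = Q s a.1 * massE Q a.2.1 := by
    rintro ⟨s', ⟨⟨m, g⟩, h⟩⟩
    dsimp only [E, massE]
    rw [Fin.prod_univ_succ]
    refine congrArg₂ (· * ·) ?_ ?_
    · show Q ((Fin.cons s g : Fin (m + 2) → S) (Fin.castSucc 0)) ((Fin.cons s g : Fin (m + 2) → S) (Fin.succ 0)) = Q s s'
      have h1 : g 0 = s' := h.1
      rw [Fin.castSucc_zero, Fin.cons_zero, Fin.cons_succ, h1]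
    · apply Finset.prod_congr rfl
      intro i _
      show Q ((Fin.cons s g : Fin (m + 2) → S) i.succ.castSucc) ((Fin.cons s g : Fin (m + 2) → S) i.succ.succ) = _
      rw [← Fin.succ_castSucc, Fin.cons_succ, Fin.cons_succ]
  calc (∑' a : Σ s' : S, {π : MCPath S // IsHitting T s' π}, massE Q (E a).1)
      = ∑' a : Σ s' : S, {π : MCPath S // IsHitting T s' π}, Q s a.1 * massE Q a.2.1 :=
        tsum_congr hmass
    _ = ∑' s' : S, ∑' π : {π : MCPath S // IsHitting T s' π}, Q s s' * massE Q π.1 :=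
        ENNReal.tsum_sigma' _
    _ = ∑ s' : S, ∑' π : {π : MCPath S // IsHitting T s' π}, Q s s' * massE Q π.1 :=
        tsum_fintype _
    _ = ∑ s' : S, Q s s' * reachE Q T s' := by
        refine Finset.sum_congr rfl fun s' _ => ?_
        rw [reachE, ENNReal.tsum_mul_left]

theorem reachE_absorb (Q : S → S → ℝ≥0∞) (T : Set S) (s : S) (hs : s ∉ T)
    (habs : ∀ s', s' ≠ s → Q s s' = 0) : reachE Q T s = 0 := by
  rw [reachE, ENNReal.tsum_eq_zero]
  rintro ⟨⟨m, g⟩, h⟩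
  have hex : ∃ i : Fin m, g i.castSucc = s ∧ g i.succ ≠ s := by
    by_contra hno
    push_neg at hno
    have hall : ∀ j : Fin (m + 1), g j = s := by
      intro j
      induction j using Fin.induction with
      | zero => exact h.1
      | succ i ih => exact hno i ih
    exact hs (by rw [← hall (Fin.last m)]; exact h.2.1)
  obtain ⟨i, hi1, hi2⟩ := hex
  show massE Q ⟨m, g⟩ = 0
  rw [massE]
  refine Finset.prod_eq_zero (Finset.mem_univ i) ?_
  show Q (g i.castSucc) (g i.succ) = 0
  rw [hi1]
  exact habs _ hi2

theorem reachProb_eq_toReal (P : S → S → ℝ) (hP : ∀ a b, 0 ≤ P a b) (T : Set S) (s : S) :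
    reachProb P T s = (reachE (fun a b => ENNReal.ofReal (P a b)) T s).toReal := by
  rw [reachE, ENNReal.tsum_toReal_eq]
  · rw [reachProb]
    apply tsum_congr
    intro π
    rw [massE, ENNReal.toReal_prod, pathMass]
    exact Finset.prod_congr rfl fun i _ => (ENNReal.toReal_ofReal (hP _ _)).symm
  · intro π
    rw [massE]
    exact (ENNReal.prod_lt_top (fun i _ => ENNReal.ofReal_lt_top)).ne

theorem reachProb_equiv {S₂ : Type} (e : S ≃ S₂) (P : S → S → ℝ) (T : Set S) (s : S) :
    reachProb (fun a b => P (e.symm a) (e.symm b)) (e.symm ⁻¹' T) (e s) = reachProb P T s := by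
  let E : {π : MCPath S // IsHitting T s π} →
      {π : MCPath S₂ // IsHitting (e.symm ⁻¹' T) (e s) π} :=
    fun π => ⟨⟨π.1.1, fun i => e (π.1.2 i)⟩, by
      obtain ⟨⟨m, g⟩, h⟩ := π
      refine ⟨?_, ?_, fun i => ?_⟩
      · show e (g 0) = e s
        exact congrArg e h.1
      · show e.symm (e (g (Fin.last m))) ∈ T
        rw [Equiv.symm_apply_apply]
        exact h.2.1
      · show e.symm (e (g i.castSucc)) ∉ T
        rw [Equiv.symm_apply_apply]
        exact h.2.2 i⟩
  have hbij : Function.Bijective E := by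
    constructor
    · rintro ⟨⟨m₁, g₁⟩, h₁⟩ ⟨⟨m₂, g₂⟩, h₂⟩ hab
      have hval := congrArg Subtype.val hab
      dsimp only [E] at hval
      have hm : m₁ = m₂ := congrArg (fun x : MCPath S₂ => x.1) hval
      subst hm
      have hval2 := eq_of_heq (Sigma.mk.inj_iff.mp hval).2
      apply Subtype.ext
      refine congrArg (Sigma.mk m₁) ?_
      funext i
      exact e.injective (congrFun hval2 i)
    · rintro ⟨⟨m, g⟩, h⟩
      refine ⟨⟨⟨m, fun i => e.symm (g i)⟩, ?_, ?_, fun i => h.2.2 i⟩, ?_⟩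
      · show e.symm (g 0) = s
        have h1 : g 0 = e s := h.1
        rw [h1, Equiv.symm_apply_apply]
      · exact h.2.1
      · apply Subtype.ext
        refine congrArg (Sigma.mk m) ?_
        funext i
        show e (e.symm (g i)) = g i
        rw [Equiv.apply_symm_apply]
  rw [reachProb, reachProb,
    ← (Equiv.ofBijective E hbij).tsum_eq
      (fun π : {π : MCPath S₂ // IsHitting (e.symm ⁻¹' T) (e s) π} =>
        pathMass (fun a b => P (e.symm a) (e.symm b)) π.1)]
  apply tsum_congr
  rintro ⟨⟨m, g⟩, h⟩
  show ∏ i : Fin m, _ = ∏ i : Fin m, _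
  refine Finset.prod_congr rfl fun i _ => ?_
  show P (e.symm (e (g i.castSucc))) (e.symm (e (g i.succ))) = P (g i.castSucc) (g i.succ)
  rw [Equiv.symm_apply_apply, Equiv.symm_apply_apply]

end ReachTheory

/-- An entry of a simple pMC: a nonnegative rational constant, a variable `x`, or `1 - x`. -/
def SimpleEntry {X : Type} (p : MvPolynomial X ℚ) : Prop :=
  (∃ q : ℚ, 0 ≤ q ∧ p = MvPolynomial.C q) ∨
  (∃ x : X, p = MvPolynomial.X x) ∨
  (∃ x : X, p = 1 - MvPolynomial.X x)

/-- A simple parametric Markov chain over parameter set `X` with `n` states: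
all transition polynomials are simple entries and every row sums to `1` as a polynomial. -/
structure SimplePMC (X : Type) (n : ℕ) where
  init : Fin n
  P : Fin n → Fin n → MvPolynomial X ℚ
  simple : ∀ s s', SimpleEntry (P s s')
  rowSum : ∀ s, ∑ s', P s s' = 1

/-- A valuation is well-defined if every parameter value lies in `[0,1]`. -/
def WDVal {X : Type} (val : X → ℝ) : Prop := ∀ x, val x ∈ Set.Icc (0 : ℝ) 1

/-- A valuation is graph-preserving if every parameter value lies in `(0,1)`. -/
def GPVal {X : Type} (val : X → ℝ) : Prop := ∀ x, val x ∈ Set.Ioo (0 : ℝ) 1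

/-- The transition matrix of the instantiation `D[val]`. -/
noncomputable def instP {X : Type} {n : ℕ} (D : SimplePMC X n) (val : X → ℝ) :
    Fin n → Fin n → ℝ :=
  fun s s' => MvPolynomial.aeval val (D.P s s')

/-- The only cycles of the pMC are self-loops at absorbing states. -/
def OnlySelfLoopCycles {X : Type} {n : ℕ} (D : SimplePMC X n) : Prop :=
  ∀ (l : ℕ) (c : Fin (l + 1) → Fin n), 0 < l →
    (∀ i : Fin l, D.P (c i.castSucc) (c i.succ) ≠ 0) → c (Fin.last l) = c 0 →
    (∀ i, c i = c 0) ∧ D.P (c 0) (c 0) = 1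

set_option linter.unusedSectionVars false
noncomputable section Construction

open MvPolynomial

variable {X : Type} [Fintype X]

namespace Red

def lst (d : X →₀ ℕ) : List X := d.toMultiset.toList

/-- number of gadget layers -/
def M (f : MvPolynomial X ℚ) : ℕ := (f.support.sup fun d => (lst d).length) + 1

abbrev Stt (f : MvPolynomial X ℚ) : Type :=
  Fin 3 ⊕ ({d // d ∈ f.support} × Fin (M f))

variable (f : MvPolynomial X ℚ)

def ini : Stt f := Sum.inl 0
def tgt : Stt f := Sum.inl 1
def snk : Stt f := Sum.inl 2

def Bq : ℚ := 2 * ∑ d ∈ f.support, |f.coeff d|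
def Nq : ℚ := ∑ d ∈ f.support, if f.coeff d < 0 then |f.coeff d| / Bq f else 0
def Pq : ℚ := ∑ d ∈ f.support, if 0 < f.coeff d then f.coeff d / Bq f else 0
def aq : ℚ := 1/2 - Nq f
def skq : ℚ := 1/2 - Pq f

def fail (d : {d // d ∈ f.support}) : Stt f := if 0 < f.coeff d.1 then snk f else tgt f
def done (d : {d // d ∈ f.support}) : Stt f := if 0 < f.coeff d.1 then tgt f else snk f

theorem len_lt_M (d : {d // d ∈ f.support}) : (lst d.1).length < M f :=
  Nat.lt_succ_of_le (Finset.le_sup (f := fun d => (lst d).length) d.2)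

open Classical in
def initRow : Stt f → MvPolynomial X ℚ :=
  Sum.elim (fun j => if j = 1 then C (aq f) else if j = 2 then C (skq f) else 0)
    (fun p => if (p.2 : ℕ) = 0 then C (|f.coeff p.1.1| / Bq f) else 0)

open Classical in
def R : Stt f → Stt f → MvPolynomial X ℚ :=
  Sum.elim
    (fun j => if j = 0 then initRow f else fun s' => if s' = Sum.inl j then 1 else 0)
    (fun p =>
      if h : (p.2 : ℕ) < (lst p.1.1).length then
        fun s' =>
          if s' = Sum.inr (p.1, ⟨(p.2 : ℕ) + 1, by have := len_lt_M f p.1; omega⟩) then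
            MvPolynomial.X ((lst p.1.1).get ⟨(p.2 : ℕ), h⟩)
          else if s' = fail f p.1 then 1 - MvPolynomial.X ((lst p.1.1).get ⟨(p.2 : ℕ), h⟩) else 0
      else if (p.2 : ℕ) = (lst p.1.1).length then fun s' => if s' = done f p.1 then 1 else 0
      else fun s' => if s' = Sum.inr p then 1 else 0)

theorem initRow_inl (j : Fin 3) : initRow f (Sum.inl j) =
    (if j = 1 then C (aq f) else if j = 2 then C (skq f) else 0) := rfl

theorem initRow_inr (p : {d // d ∈ f.support} × Fin (M f)) :
    initRow f (Sum.inr p) = (if (p.2 : ℕ) = 0 then C (|f.coeff p.1.1| / Bq f) else 0) := rfl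

open Classical in
theorem R_inl_zero : R f (Sum.inl 0) = initRow f := by
  show (if (0 : Fin 3) = 0 then initRow f
    else fun s' => if s' = Sum.inl 0 then 1 else 0) = initRow f
  rw [if_pos rfl]

open Classical in
theorem R_inl_ne (j : Fin 3) (hj : j ≠ 0) :
    R f (Sum.inl j) = fun s' => if s' = Sum.inl j then 1 else 0 := by
  show (if j = 0 then initRow f
    else fun s' => if s' = Sum.inl j then 1 else 0) = _
  rw [if_neg hj]

open Classical in
theorem R_step (p : {d // d ∈ f.support} × Fin (M f)) (h : (p.2 : ℕ) < (lst p.1.1).length) :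
    R f (Sum.inr p) = fun s' =>
      if s' = Sum.inr (p.1, ⟨(p.2 : ℕ) + 1, by have := len_lt_M f p.1; omega⟩) then
        MvPolynomial.X ((lst p.1.1).get ⟨(p.2 : ℕ), h⟩)
      else if s' = fail f p.1 then 1 - MvPolynomial.X ((lst p.1.1).get ⟨(p.2 : ℕ), h⟩) else 0 := by
  show dite _ _ _ = _
  rw [dif_pos h]

open Classical in
theorem R_done (p : {d // d ∈ f.support} × Fin (M f)) (h : ¬ (p.2 : ℕ) < (lst p.1.1).length)
    (h2 : (p.2 : ℕ) = (lst p.1.1).length) :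
    R f (Sum.inr p) = fun s' => if s' = done f p.1 then 1 else 0 := by
  show dite _ _ _ = _
  rw [dif_neg h, if_pos h2]

open Classical in
theorem R_junk (p : {d // d ∈ f.support} × Fin (M f)) (h : ¬ (p.2 : ℕ) < (lst p.1.1).length)
    (h2 : ¬ (p.2 : ℕ) = (lst p.1.1).length) :
    R f (Sum.inr p) = fun s' => if s' = Sum.inr p then 1 else 0 := by
  show dite _ _ _ = _
  rw [dif_neg h, if_neg h2]

end Red
end Construction
-- ### generic delta-sum lemmas
section Delta
variable {α β : Type*} [Fintype α] [DecidableEq α] [AddCommMonoid β]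

theorem sum_delta_one (A : α) (p : β) : ∑ s' : α, (if s' = A then p else 0) = p := by
  simp

theorem sum_delta_two (A B : α) (hAB : A ≠ B) (p q : β) :
    ∑ s' : α, (if s' = A then p else if s' = B then q else 0) = p + q := by
  have key : ∀ s' : α, (if s' = A then p else if s' = B then q else 0) =
      (if s' = A then p else 0) + (if s' = B then q else 0) := by
    intro s'
    by_cases h1 : s' = A
    · subst h1
      simp [hAB]
    · simp [h1]
  simp only [key, Finset.sum_add_distrib]
  simp

end Delta

namespace Red

set_option linter.unusedSectionVars false

variable {X : Type} [Fintype X] (f : MvPolynomial X ℚ)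

open MvPolynomial

theorem Bq_nonneg : 0 ≤ Bq f := by
  have : (0:ℚ) ≤ ∑ d ∈ f.support, |f.coeff d| :=
    Finset.sum_nonneg fun d _ => abs_nonneg _
  rw [Bq]; linarith

theorem Nq_nonneg : 0 ≤ Nq f :=
  Finset.sum_nonneg fun d _ => by
    split_ifs with h
    · exact div_nonneg (abs_nonneg _) (Bq_nonneg f)
    · exact le_refl 0
theorem Pq_nonneg : 0 ≤ Pq f :=
  Finset.sum_nonneg fun d _ => by
    split_ifs with h
    · exact div_nonneg (le_of_lt h) (Bq_nonneg f)
    · exact le_refl 0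

theorem NPS : Nq f + Pq f = ∑ d ∈ f.support, |f.coeff d| / Bq f := by
  rw [Nq, Pq, ← Finset.sum_add_distrib]
  refine Finset.sum_congr rfl fun d hd => ?_
  have hc : f.coeff d ≠ 0 := (MvPolynomial.mem_support_iff).mp hd
  rcases lt_trichotomy (f.coeff d) 0 with h | h | h
  · rw [if_pos h, if_neg (by linarith), add_zero, abs_of_neg h]
  · exact absurd h hc
  · rw [if_neg (by linarith), if_pos h, zero_add, abs_of_pos h]

theorem sumdiv : ∑ d ∈ f.support, |f.coeff d| / Bq f ≤ 1/2 := by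
  rw [← Finset.sum_div]
  set s := ∑ d ∈ f.support, |f.coeff d| with hs
  have hs0 : 0 ≤ s := Finset.sum_nonneg fun d _ => abs_nonneg _
  by_cases h : s = 0
  · rw [h]; norm_num
  · rw [Bq, ← hs]
    have : s / (2 * s) = 1 / 2 := by
      field_simp
    rw [this]

theorem aq_nonneg : 0 ≤ aq f := by
  have h1 := NPS f; have h2 := sumdiv f; have h3 := Pq_nonneg f
  rw [aq]; linarith

theorem skq_nonneg : 0 ≤ skq f := by
  have h1 := NPS f; have h2 := sumdiv f; have h3 := Nq_nonneg f
  rw [skq]; linarith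

theorem row_total : aq f + skq f + ∑ d ∈ f.support, |f.coeff d| / Bq f = 1 := by
  have h1 := NPS f
  rw [aq, skq]; linarith

-- SimpleEntry helpers
theorem simple_zero : SimpleEntry (0 : MvPolynomial X ℚ) :=
  Or.inl ⟨0, le_refl 0, by simp⟩
theorem simple_one : SimpleEntry (1 : MvPolynomial X ℚ) :=
  Or.inl ⟨1, by norm_num, by simp⟩
theorem simple_C {q : ℚ} (h : 0 ≤ q) : SimpleEntry (MvPolynomial.C q : MvPolynomial X ℚ) :=
  Or.inl ⟨q, h, rfl⟩
theorem simple_X (x : X) : SimpleEntry (MvPolynomial.X x : MvPolynomial X ℚ) :=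
  Or.inr (Or.inl ⟨x, rfl⟩)
theorem simple_oneSub (x : X) : SimpleEntry (1 - MvPolynomial.X x : MvPolynomial X ℚ) :=
  Or.inr (Or.inr ⟨x, rfl⟩)

theorem simple_R : ∀ s s', SimpleEntry (R f s s') := by
  rintro (j | p) s'
  · by_cases hj : j = 0
    · subst hj
      rw [R_inl_zero]
      rcases s' with j' | p'
      · rw [initRow_inl]
        split_ifs
        · exact simple_C (aq_nonneg f)
        · exact simple_C (skq_nonneg f)
        · exact simple_zero
      · rw [initRow_inr]
        split_ifs
        · exact simple_C (div_nonneg (abs_nonneg _) (Bq_nonneg f))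
        · exact simple_zero
    · rw [R_inl_ne f j hj]
      dsimp only
      split_ifs
      · exact simple_one
      · exact simple_zero
  · by_cases h : (p.2 : ℕ) < (lst p.1.1).length
    · rw [R_step f p h]
      dsimp only
      split_ifs
      · exact simple_X _
      · exact simple_oneSub _
      · exact simple_zero
    · by_cases h2 : (p.2 : ℕ) = (lst p.1.1).length
      · rw [R_done f p h h2]
        dsimp only
        split_ifs
        · exact simple_one
        · exact simple_zero
      · rw [R_junk f p h h2]
        dsimp only
        split_ifs
        · exact simple_one
        · exact simple_zero

theorem rowSum_R : ∀ s, ∑ s', R f s s' = 1 := by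
  classical
  rintro (j | p)
  · by_cases hj : j = 0
    · subst hj
      rw [R_inl_zero]
      rw [Fintype.sum_sum_type]
      have hl : ∑ j : Fin 3, initRow f (Sum.inl j) = C (aq f) + C (skq f) := by
        rw [Fin.sum_univ_three, initRow_inl, initRow_inl, initRow_inl]
        norm_num [Fin.ext_iff]
      have hr : ∑ p : {d // d ∈ f.support} × Fin (M f), initRow f (Sum.inr p)
          = C (∑ d ∈ f.support, |f.coeff d| / Bq f) := by
        rw [Fintype.sum_prod_type]
        have inner : ∀ d : {d // d ∈ f.support},
            ∑ i : Fin (M f), initRow f (Sum.inr (d, i)) = C (|f.coeff d.1| / Bq f) := by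
          intro d
          have hit : ∀ i : Fin (M f), initRow f (Sum.inr (d, i)) =
              if i = (⟨0, Nat.succ_pos _⟩ : Fin (M f)) then C (|f.coeff d.1| / Bq f) else 0 := by
            intro i
            rw [initRow_inr]
            congr 1
            simp [Fin.ext_iff]
          simp only [hit]
          exact sum_delta_one _ _
        simp only [inner]
        rw [← map_sum]
        congr 1
        exact Finset.sum_coe_sort f.support fun d => |f.coeff d| / Bq f
      rw [hl, hr, ← map_add, ← map_add, ← map_one (MvPolynomial.C (σ := X) (R := ℚ))]
      congr 1
      exact row_total f
    · rw [R_inl_ne f j hj]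
      exact sum_delta_one _ _
  · by_cases h : (p.2 : ℕ) < (lst p.1.1).length
    · rw [R_step f p h]
      rw [sum_delta_two _ _ (by rw [fail]; split_ifs <;> simp [tgt, snk]) _ _]
      ring
    · by_cases h2 : (p.2 : ℕ) = (lst p.1.1).length
      · rw [R_done f p h h2]
        exact sum_delta_one _ _
      · rw [R_junk f p h h2]
        exact sum_delta_one _ _

end Red
-- ### generic one/two-successor reachability steps
section RowSteps
open scoped ENNReal
variable {S : Type} [Fintype S] [DecidableEq S]

theorem reachE_row_one (Q : S → S → ℝ≥0∞) (T : Set S) (s : S) (hs : s ∉ T)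
    (A : S) (p : ℝ≥0∞) (hrow : ∀ s', Q s s' = if s' = A then p else 0) :
    reachE Q T s = p * reachE Q T A := by
  rw [reachE_step Q T s hs]
  have key : ∀ s', Q s s' * reachE Q T s' =
      if s' = A then p * reachE Q T A else 0 := by
    intro s'
    rw [hrow]
    by_cases h : s' = A
    · subst h; simp
    · simp [h]
  simp only [key]
  exact sum_delta_one _ _

theorem reachE_row_two (Q : S → S → ℝ≥0∞) (T : Set S) (s : S) (hs : s ∉ T)
    (A B : S) (hAB : A ≠ B) (p q : ℝ≥0∞)
    (hrow : ∀ s', Q s s' = if s' = A then p else if s' = B then q else 0) :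
    reachE Q T s = p * reachE Q T A + q * reachE Q T B := by
  rw [reachE_step Q T s hs]
  have key : ∀ s', Q s s' * reachE Q T s' =
      (if s' = A then p * reachE Q T A else if s' = B then q * reachE Q T B else 0) := by
    intro s'
    rw [hrow]
    by_cases h : s' = A
    · subst h; simp
    · by_cases h2 : s' = B
      · subst h2; simp [h]
      · simp [h, h2]
  simp only [key]
  exact sum_delta_two _ _ hAB _ _

end RowSteps

noncomputable section RedVals
namespace Red

set_option linter.unusedSectionVars false

open Classical

open MvPolynomial
open scoped ENNReal

variable {X : Type} [Fintype X] (f : MvPolynomial X ℚ) (val : X → ℝ)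

theorem aeval_Cq (q : ℚ) : MvPolynomial.aeval val (C q) = (q : ℝ) := by
  rw [MvPolynomial.aeval_C]
  exact eq_ratCast _ q

def Pr : Stt f → Stt f → ℝ := fun s s' => MvPolynomial.aeval val (R f s s')

def Qe : Stt f → Stt f → ℝ≥0∞ := fun s s' => ENNReal.ofReal (Pr f val s s')

def TS : Set (Stt f) := {tgt f}

theorem tgt_mem : tgt f ∈ TS f := rfl
theorem snk_not_mem : snk f ∉ TS f := by
  simp only [TS, snk, tgt, Set.mem_singleton_iff, Sum.inl.injEq]
  decide
theorem ini_not_mem : ini f ∉ TS f := by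
  simp only [TS, ini, tgt, Set.mem_singleton_iff, Sum.inl.injEq]
  decide
theorem inr_not_mem (p : {d // d ∈ f.support} × Fin (M f)) : Sum.inr p ∉ TS f := by
  simp [TS, tgt]

theorem Pr_nonneg (hval : WDVal val) : ∀ s s', 0 ≤ Pr f val s s' := by
  intro s s'
  rcases simple_R f s s' with ⟨q, hq, hP⟩ | ⟨x, hP⟩ | ⟨x, hP⟩
  · rw [Pr, hP, aeval_Cq]
    exact_mod_cast hq
  · rw [Pr, hP, MvPolynomial.aeval_X]
    exact (hval x).1
  · rw [Pr, hP, map_sub, map_one, MvPolynomial.aeval_X]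
    have := (hval x).2
    linarith

/-- suffix product of a monomial gadget -/
def rdv (d : X →₀ ℕ) (j : ℕ) : ℝ := (((lst d).drop j).map val).prod

theorem list_prod01 : ∀ l : List ℝ, (∀ a ∈ l, 0 ≤ a ∧ a ≤ 1) → 0 ≤ l.prod ∧ l.prod ≤ 1 := by
  intro l hl
  induction l with
  | nil => simp
  | cons a t ih =>
    have ha := hl a List.mem_cons_self
    have ht := ih (fun b hb => hl b (List.mem_cons_of_mem a hb))
    rw [List.prod_cons]
    constructor
    · exact mul_nonneg ha.1 ht.1
    · calc a * t.prod ≤ 1 * 1 := by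
            apply mul_le_mul ha.2 ht.2 ht.1 zero_le_one
        _ = 1 := one_mul 1
  
theorem rdv01 (hval : WDVal val) (d : X →₀ ℕ) (j : ℕ) : 0 ≤ rdv val d j ∧ rdv val d j ≤ 1 := by
  apply list_prod01
  intro a ha
  obtain ⟨x, _, rfl⟩ := List.mem_map.mp ha
  exact ⟨(hval x).1, (hval x).2⟩

theorem rdv_len (d : X →₀ ℕ) : rdv val d (lst d).length = 1 := by
  rw [rdv, List.drop_length]
  simp

theorem rdv_succ (d : X →₀ ℕ) (j : ℕ) (h : j < (lst d).length) :
    rdv val d j = val ((lst d).get ⟨j, h⟩) * rdv val d (j + 1) := by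
  rw [rdv, rdv, List.drop_eq_getElem_cons h, List.map_cons, List.prod_cons]
  rfl

theorem reach_tgt : reachE (Qe f val) (TS f) (tgt f) = 1 :=
  reachE_mem _ _ _ (tgt_mem f)

theorem reach_snk : reachE (Qe f val) (TS f) (snk f) = 0 := by
  refine reachE_absorb _ _ _ (snk_not_mem f) ?_
  intro s' hs'
  rw [Qe, Pr, snk, R_inl_ne f 2 (by decide)]
  dsimp only
  rw [if_neg (by simpa [snk] using hs')]
  simp

theorem reach_gadget (hval : WDVal val) :
    ∀ (k : ℕ) (d : {d // d ∈ f.support}) (j : ℕ) (hjk : j + k = (lst d.1).length)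
      (hj : j < M f),
      reachE (Qe f val) (TS f) (Sum.inr (d, ⟨j, hj⟩)) =
        ENNReal.ofReal (if 0 < f.coeff d.1 then rdv val d.1 j else 1 - rdv val d.1 j) := by
  intro k
  induction k with
  | zero =>
    intro d j hjk hj
    have hrow : ∀ s', Qe f val (Sum.inr (d, ⟨j, hj⟩)) s' =
        if s' = done f d then 1 else 0 := by
      intro s'
      rw [Qe, Pr, R_done f (d, ⟨j, hj⟩) (by dsimp only; omega) (by dsimp only; omega)]
      dsimp only
      by_cases h : s' = done f d
      · simp [h]
      · simp [h]
    rw [reachE_row_one _ _ _ (inr_not_mem f _) _ _ hrow, one_mul]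
    rw [done]
    have hr : rdv val d.1 j = 1 := by
      have : j = (lst d.1).length := by omega
      rw [this, rdv_len]
    rw [hr]
    split_ifs
    · rw [reach_tgt]
      simp
    · rw [reach_snk]
      simp
  | succ k ih =>
    intro d j hjk hj
    have hlt : j < (lst d.1).length := by omega
    have hj1 : j + 1 < M f := by have := len_lt_M f d; omega
    set x := (lst d.1).get ⟨j, hlt⟩ with hx
    have hv0 : 0 ≤ val x := (hval x).1
    have hv1 : val x ≤ 1 := (hval x).2
    have hone : 0 ≤ 1 - val x := by linarith
    have hAB : (Sum.inr (d, ⟨j + 1, hj1⟩) : Stt f) ≠ fail f d := by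
      rw [fail]; split_ifs <;> simp [snk, tgt]
    have hrow : ∀ s', Qe f val (Sum.inr (d, ⟨j, hj⟩)) s' =
        if s' = Sum.inr (d, ⟨j + 1, hj1⟩) then ENNReal.ofReal (val x)
        else if s' = fail f d then ENNReal.ofReal (1 - val x) else 0 := by
      intro s'
      rw [Qe, Pr, R_step f (d, ⟨j, hj⟩) hlt]
      dsimp only
      by_cases h : s' = Sum.inr (d, ⟨j + 1, hj1⟩)
      · rw [if_pos (by exact_mod_cast h), if_pos h]
        rw [MvPolynomial.aeval_X]
      · rw [if_neg (by exact_mod_cast h), if_neg h]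
        by_cases h2 : s' = fail f d
        · rw [if_pos h2, if_pos h2, map_sub, map_one, MvPolynomial.aeval_X]
        · rw [if_neg h2, if_neg h2]
          simp
    rw [reachE_row_two _ _ _ (inr_not_mem f _) _ _ hAB _ _ hrow]
    rw [ih d (j + 1) (by omega) hj1]
    have hrd := rdv_succ val d.1 j hlt
    rw [← hx] at hrd
    have hrd01 := rdv01 val hval d.1 (j + 1)
    rw [fail]
    by_cases hc : 0 < f.coeff d.1
    · rw [if_pos hc, if_pos hc, if_pos hc, reach_snk, mul_zero, add_zero,
        ← ENNReal.ofReal_mul hv0, hrd]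
    · rw [if_neg hc, if_neg hc, if_neg hc, reach_tgt, mul_one,
        ← ENNReal.ofReal_mul hv0,
        ← ENNReal.ofReal_add (mul_nonneg hv0 (by linarith [hrd01.2])) hone]
      congr 1
      rw [hrd]
      ring

end Red
end RedVals
noncomputable section RedRho
namespace Red

set_option linter.unusedSectionVars false
set_option linter.unusedVariables false

open Classical MvPolynomial
open scoped ENNReal

variable {X : Type} [Fintype X] (f : MvPolynomial X ℚ) (val : X → ℝ)

/-- the reachability value from the initial state -/
def rho : ℝ :=
  (aq f : ℝ) + ∑ d : {d // d ∈ f.support},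
    ((|f.coeff d.1| / Bq f : ℚ) : ℝ) *
      (if 0 < f.coeff d.1 then rdv val d.1 0 else 1 - rdv val d.1 0)

theorem rterm01 (hval : WDVal val) (d : X →₀ ℕ) :
    0 ≤ (if 0 < f.coeff d then rdv val d 0 else 1 - rdv val d 0) ∧
    (if 0 < f.coeff d then rdv val d 0 else 1 - rdv val d 0) ≤ 1 := by
  have h := rdv01 val hval d 0
  split_ifs <;> constructor <;> linarith [h.1, h.2]

theorem rho_nonneg (hval : WDVal val) : 0 ≤ rho f val := by
  have h1 : (0:ℝ) ≤ (aq f : ℝ) := by exact_mod_cast aq_nonneg f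
  have h2 : (0:ℝ) ≤ ∑ d : {d // d ∈ f.support},
      ((|f.coeff d.1| / Bq f : ℚ) : ℝ) *
        (if 0 < f.coeff d.1 then rdv val d.1 0 else 1 - rdv val d.1 0) := by
    refine Finset.sum_nonneg fun d _ => mul_nonneg ?_ (rterm01 f val hval d.1).1
    exact_mod_cast div_nonneg (abs_nonneg _) (Bq_nonneg f)
  rw [rho]; linarith

theorem reach_ini (hval : WDVal val) :
    reachE (Qe f val) (TS f) (ini f) = ENNReal.ofReal (rho f val) := by
  rw [reachE_step _ _ _ (ini_not_mem f), Fintype.sum_sum_type, Fin.sum_univ_three]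
  have hQ : ∀ s', Qe f val (ini f) s' = ENNReal.ofReal (aeval val (initRow f s')) := by
    intro s'
    rw [Qe, Pr, ini, R_inl_zero]
  have h0 : Qe f val (ini f) (Sum.inl 0) * reachE (Qe f val) (TS f) (Sum.inl 0) = 0 := by
    rw [hQ, initRow_inl]
    norm_num [Fin.ext_iff]
  have h1 : Qe f val (ini f) (Sum.inl 1) * reachE (Qe f val) (TS f) (Sum.inl 1) =
      ENNReal.ofReal ((aq f : ℝ)) := by
    rw [hQ, initRow_inl, if_pos rfl, aeval_Cq,
      show (Sum.inl 1 : Stt f) = tgt f from rfl, reach_tgt, mul_one]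
  have h2 : Qe f val (ini f) (Sum.inl 2) * reachE (Qe f val) (TS f) (Sum.inl 2) = 0 := by
    rw [show (Sum.inl 2 : Stt f) = snk f from rfl, reach_snk, mul_zero]
  rw [h0, h1, h2, zero_add, add_zero]
  have hr : ∑ p : {d // d ∈ f.support} × Fin (M f),
      Qe f val (ini f) (Sum.inr p) * reachE (Qe f val) (TS f) (Sum.inr p) =
      ENNReal.ofReal (∑ d : {d // d ∈ f.support},
        ((|f.coeff d.1| / Bq f : ℚ) : ℝ) *
          (if 0 < f.coeff d.1 then rdv val d.1 0 else 1 - rdv val d.1 0)) := by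
    rw [Fintype.sum_prod_type]
    have inner : ∀ d : {d // d ∈ f.support},
        ∑ i : Fin (M f), Qe f val (ini f) (Sum.inr (d, i)) *
          reachE (Qe f val) (TS f) (Sum.inr (d, i)) =
        ENNReal.ofReal (((|f.coeff d.1| / Bq f : ℚ) : ℝ) *
          (if 0 < f.coeff d.1 then rdv val d.1 0 else 1 - rdv val d.1 0)) := by
      intro d
      have hterm : ∀ i : Fin (M f),
          Qe f val (ini f) (Sum.inr (d, i)) * reachE (Qe f val) (TS f) (Sum.inr (d, i)) =
          if i = (⟨0, Nat.succ_pos _⟩ : Fin (M f)) then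
            ENNReal.ofReal (((|f.coeff d.1| / Bq f : ℚ) : ℝ)) *
              reachE (Qe f val) (TS f) (Sum.inr (d, ⟨0, Nat.succ_pos _⟩)) else 0 := by
        intro i
        rw [hQ, initRow_inr]
        by_cases h : i = (⟨0, Nat.succ_pos _⟩ : Fin (M f))
        · rw [if_pos h, if_pos (by rw [h]), aeval_Cq, h]
        · rw [if_neg h, if_neg (by simpa [Fin.ext_iff] using h)]
          simp
      simp only [hterm]
      rw [sum_delta_one]
      rw [reach_gadget f val hval (lst d.1).length d 0 (Nat.zero_add _) (Nat.succ_pos _)]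
      rw [← ENNReal.ofReal_mul (by exact_mod_cast div_nonneg (abs_nonneg _) (Bq_nonneg f))]
    simp only [inner]
    rw [← ENNReal.ofReal_sum_of_nonneg]
    intro d _
    exact mul_nonneg (by exact_mod_cast div_nonneg (abs_nonneg _) (Bq_nonneg f))
      (rterm01 f val hval d.1).1
  rw [hr, ← ENNReal.ofReal_add (by exact_mod_cast aq_nonneg f)
    (Finset.sum_nonneg fun d _ => mul_nonneg
      (by exact_mod_cast div_nonneg (abs_nonneg _) (Bq_nonneg f)) (rterm01 f val hval d.1).1)]
  rw [rho]

theorem reachProb_ini (hval : WDVal val) :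
    reachProb (Pr f val) (TS f) (ini f) = rho f val := by
  rw [reachProb_eq_toReal _ (Pr_nonneg f val hval),
    show (fun a b => ENNReal.ofReal (Pr f val a b)) = Qe f val from rfl,
    reach_ini f val hval, ENNReal.toReal_ofReal (rho_nonneg f val hval)]

/-- the suffix product at 0 is the monomial value -/
theorem rdv_zero_eq (d : X →₀ ℕ) :
    rdv val d 0 = ∏ x ∈ d.support, val x ^ d x := by
  rw [rdv, List.drop_zero, lst]
  have h1 : (d.toMultiset.toList.map val).prod =
      ((d.toMultiset.toList.map val : List ℝ) : Multiset ℝ).prod := (Multiset.prod_coe _).symm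
  rw [h1, ← Multiset.map_coe, Multiset.coe_toList, Finsupp.toMultiset_map,
    Finsupp.prod_toMultiset]
  rw [Finsupp.prod_mapDomain_index (fun b => pow_zero b) (fun b m₁ m₂ => pow_add b m₁ m₂)]
  rfl

end Red
end RedRho
noncomputable section RedFinal
namespace Red

set_option linter.unusedSectionVars false
set_option linter.unusedVariables false

open Classical MvPolynomial
open scoped ENNReal

variable {X : Type} [Fintype X] (f : MvPolynomial X ℚ) (val : X → ℝ)

theorem F_expand : (MvPolynomial.aeval val f : ℝ) =
    ∑ d ∈ f.support, ((f.coeff d : ℚ) : ℝ) * ∏ x ∈ d.support, val x ^ d x := by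
  rw [MvPolynomial.aeval_def, MvPolynomial.eval₂_eq]
  refine Finset.sum_congr rfl fun d _ => ?_
  congr 1

theorem rho_eq : rho f val = 1/2 + (MvPolynomial.aeval val f) / (Bq f : ℝ) := by
  rw [rho, Finset.sum_coe_sort f.support (fun d => ((|f.coeff d| / Bq f : ℚ) : ℝ) *
    (if 0 < f.coeff d then rdv val d 0 else 1 - rdv val d 0))]
  have key : ∀ d ∈ f.support, ((|f.coeff d| / Bq f : ℚ) : ℝ) *
      (if 0 < f.coeff d then rdv val d 0 else 1 - rdv val d 0) =
      (((f.coeff d : ℚ) : ℝ) * ∏ x ∈ d.support, val x ^ d x) / (Bq f : ℝ) +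
        ((if f.coeff d < 0 then |f.coeff d| / Bq f else 0 : ℚ) : ℝ) := by
    intro d hd
    have hc0 : f.coeff d ≠ 0 := MvPolynomial.mem_support_iff.mp hd
    rw [← rdv_zero_eq]
    rcases lt_or_gt_of_ne hc0 with hneg | hpos
    · rw [if_neg (by linarith), if_pos hneg, abs_of_neg hneg]
      push_cast
      ring
    · rw [if_pos hpos, if_neg (by linarith), abs_of_pos hpos]
      push_cast
      ring
  rw [Finset.sum_congr rfl key, Finset.sum_add_distrib]
  have hN : ∑ d ∈ f.support, ((if f.coeff d < 0 then |f.coeff d| / Bq f else 0 : ℚ) : ℝ) =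
      (Nq f : ℝ) := by
    rw [Nq]
    push_cast
    rfl
  have hF : ∑ d ∈ f.support, (((f.coeff d : ℚ) : ℝ) * ∏ x ∈ d.support, val x ^ d x) / (Bq f : ℝ) =
      (MvPolynomial.aeval val f) / (Bq f : ℝ) := by
    rw [← Finset.sum_div, ← F_expand]
  rw [hN, hF]
  have haq : (aq f : ℝ) = 1/2 - (Nq f : ℝ) := by
    rw [aq]
    push_cast
    ring
  rw [haq]
  ring

theorem final_iff (hval : WDVal val) :
    reachProb (Pr f val) (TS f) (ini f) ≤ 1/2 ↔ MvPolynomial.aeval val f ≤ 0 := by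
  rw [reachProb_ini f val hval, rho_eq]
  rcases eq_or_lt_of_le (Bq_nonneg f) with hB | hB
  · have hsup : f.support = ∅ := by
      by_contra hne
      obtain ⟨d, hd⟩ := Finset.nonempty_of_ne_empty hne
      have h1 : 0 < |f.coeff d| := abs_pos.mpr (MvPolynomial.mem_support_iff.mp hd)
      have h2 : |f.coeff d| ≤ ∑ d' ∈ f.support, |f.coeff d'| :=
        Finset.single_le_sum (f := fun d' => |f.coeff d'|) (fun i _ => abs_nonneg _) hd
      have h3 : Bq f = 2 * ∑ d' ∈ f.support, |f.coeff d'| := rfl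
      rw [← hB] at h3
      linarith
    have hf : f = 0 := MvPolynomial.support_eq_empty.mp hsup
    rw [hf]
    simp
  · have hBR : (0:ℝ) < (Bq f : ℝ) := by exact_mod_cast hB
    constructor
    · intro h
      have hdiv : (MvPolynomial.aeval val f : ℝ) / (Bq f : ℝ) ≤ 0 := by linarith
      rcases div_nonpos_iff.mp hdiv with ⟨_, hb⟩ | ⟨ha, _⟩
      · linarith
      · exact ha
    · intro h
      have hdiv : (MvPolynomial.aeval val f : ℝ) / (Bq f : ℝ) ≤ 0 :=
        div_nonpos_iff.mpr (Or.inr ⟨h, hBR.le⟩)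
      linarith

-- ### cycle structure
def rank : Stt f → ℕ :=
  Sum.elim (fun j => if j = 0 then 0 else M f + 2) (fun p => 1 + (p.2 : ℕ))

theorem rank_edge (s s' : Stt f) (hne : R f s s' ≠ 0) :
    rank f s < rank f s' ∨ (s' = s ∧ R f s s = 1) := by
  rcases s with j | p
  · by_cases hj : j = 0
    · subst hj
      left
      rw [R_inl_zero] at hne
      rcases s' with j' | p'
      · rw [initRow_inl] at hne
        have hj' : j' ≠ 0 := by
          rintro rfl
          exact hne (by norm_num [Fin.ext_iff])
        show (if (0 : Fin 3) = 0 then 0 else M f + 2) < (if j' = 0 then 0 else M f + 2)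
        rw [if_pos rfl, if_neg hj']
        omega
      · show (if (0 : Fin 3) = 0 then 0 else M f + 2) < 1 + (p'.2 : ℕ)
        rw [if_pos rfl]
        omega
    · rw [R_inl_ne f j hj] at hne
      dsimp only at hne
      by_cases hs : s' = Sum.inl j
      · right
        refine ⟨hs, ?_⟩
        rw [R_inl_ne f j hj]
        dsimp only
        rw [if_pos rfl]
      · exact absurd (by rw [if_neg hs]) hne
  · by_cases h : (p.2 : ℕ) < (lst p.1.1).length
    · rw [R_step f p h] at hne
      dsimp only at hne
      left
      by_cases h1 : s' = Sum.inr (p.1,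
          (⟨(p.2 : ℕ) + 1, by have := len_lt_M f p.1; omega⟩ : Fin (M f)))
      · subst h1
        show 1 + (p.2 : ℕ) < 1 + ((p.2 : ℕ) + 1)
        omega
      · by_cases h2 : s' = fail f p.1
        · subst h2
          have hp2 : (p.2 : ℕ) < M f := p.2.isLt
          rw [fail]
          split_ifs
          · show 1 + (p.2 : ℕ) < (if (2 : Fin 3) = 0 then 0 else M f + 2)
            rw [if_neg (by decide)]
            omega
          · show 1 + (p.2 : ℕ) < (if (1 : Fin 3) = 0 then 0 else M f + 2)
            rw [if_neg (by decide)]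
            omega
        · exact absurd (by rw [if_neg h1, if_neg h2]) hne
    · by_cases h2 : (p.2 : ℕ) = (lst p.1.1).length
      · rw [R_done f p h h2] at hne
        dsimp only at hne
        left
        by_cases h1 : s' = done f p.1
        · subst h1
          have hp2 : (p.2 : ℕ) < M f := p.2.isLt
          rw [done]
          split_ifs
          · show 1 + (p.2 : ℕ) < (if (1 : Fin 3) = 0 then 0 else M f + 2)
            rw [if_neg (by decide)]
            omega
          · show 1 + (p.2 : ℕ) < (if (2 : Fin 3) = 0 then 0 else M f + 2)
            rw [if_neg (by decide)]
            omega
        · exact absurd (by rw [if_neg h1]) hne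
      · rw [R_junk f p h h2] at hne
        dsimp only at hne
        by_cases h1 : s' = Sum.inr p
        · right
          refine ⟨h1, ?_⟩
          rw [R_junk f p h h2]
          dsimp only
          rw [if_pos rfl]
        · exact absurd (by rw [if_neg h1]) hne

theorem cycles_R (l : ℕ) (c : Fin (l + 1) → Stt f) (hl : 0 < l)
    (hne : ∀ i : Fin l, R f (c i.castSucc) (c i.succ) ≠ 0) (hc : c (Fin.last l) = c 0) :
    (∀ i, c i = c 0) ∧ R f (c 0) (c 0) = 1 := by
  have mono : ∀ i : Fin l, rank f (c i.castSucc) ≤ rank f (c i.succ) := fun i => by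
    rcases rank_edge f _ _ (hne i) with h | ⟨h, _⟩
    · exact le_of_lt h
    · rw [h]
  have up : ∀ j : Fin (l + 1), rank f (c 0) ≤ rank f (c j) := by
    intro j
    induction j using Fin.induction with
    | zero => exact le_refl _
    | succ i ih => exact le_trans ih (mono i)
  have down : ∀ j : Fin (l + 1), rank f (c j) ≤ rank f (c (Fin.last l)) := by
    intro j
    induction j using Fin.reverseInduction with
    | last => exact le_refl _
    | cast i ih => exact le_trans (mono i) ih
  have loops : ∀ i : Fin l, c i.succ = c i.castSucc ∧ R f (c i.castSucc) (c i.castSucc) = 1 := by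
    intro i
    rcases rank_edge f _ _ (hne i) with h | hh
    · exfalso
      have h1 := up i.castSucc
      have h2 := down i.succ
      rw [hc] at h2
      omega
    · exact hh
  have hconst : ∀ j : Fin (l + 1), c j = c 0 := by
    intro j
    induction j using Fin.induction with
    | zero => rfl
    | succ i ih => rw [(loops i).1, ih]
  refine ⟨hconst, ?_⟩
  have h0 := (loops ⟨0, hl⟩).2
  rwa [hconst] at h0

end Red
end RedFinal

/-- Reduction underlying Theorem 5 of the paper: for every `f ∈ ℚ[X]` there is a simple pMC
`D` (whose only cycles are self-loops at absorbing states) with target set `T` such that for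
every well-defined valuation `val : X → [0,1]`:
`Pr_{D[val]}(◇T) ≤ 1/2` iff `f(val) ≤ 0`. -/
theorem exists_pmc_threshold_iff_nonpos {X : Type} [Fintype X] (f : MvPolynomial X ℚ) :
    ∃ (n : ℕ) (D : SimplePMC X n) (T : Set (Fin n)),
      OnlySelfLoopCycles D ∧
      ∀ val : X → ℝ, WDVal val →
        (reachProb (instP D val) T D.init ≤ 1 / 2 ↔ MvPolynomial.aeval val f ≤ 0) := by
  classical
  let e : Red.Stt f ≃ Fin (Fintype.card (Red.Stt f)) := Fintype.equivFin _
  refine ⟨Fintype.card (Red.Stt f),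
    { init := e (Red.ini f),
      P := fun i j => Red.R f (e.symm i) (e.symm j),
      simple := fun i j => Red.simple_R f _ _,
      rowSum := fun i => by
        rw [Equiv.sum_comp e.symm (fun s' => Red.R f (e.symm i) s')]
        exact Red.rowSum_R f _ },
    e.symm ⁻¹' (Red.TS f), ?_, ?_⟩
  · intro l c hl hne hcyc
    have h := Red.cycles_R f l (fun i => e.symm (c i)) hl (fun i => hne i)
      (by rw [hcyc])
    constructor
    · intro i
      have h1 := h.1 i
      have h2 := congrArg e h1
      simpa using h2
    · exact h.2
  · intro val hval
    have hgoal : reachProb (fun a b => Red.Pr f val (e.symm a) (e.symm b))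
        (e.symm ⁻¹' Red.TS f) (e (Red.ini f)) ≤ 1/2 ↔ MvPolynomial.aeval val f ≤ 0 := by
      rw [reachProb_equiv e (Red.Pr f val) (Red.TS f) (Red.ini f)]
      exact Red.final_iff f val hval
    exact hgoal
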